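/- arXiv:1410.2654 — 2 statements merged into one kernel-verified Lean document; each statement's English description precedes it below -/
import Mathlib

section
/- Let γ > 0, let z ∈ H, let λ > 0, and set z⁺ := T_λ(z). Let z* be a fixed point of T and x* := P_V z*. Then, with x_h := P_V z and x_f := prox_{γf}(refl_{χV}(z − γ∇h(z))): 4γλ(S_f(x_f, x*) + S_h(x_h, x*)) ≤ ‖z − z*‖² − ‖z⁺ − z*‖² + (1 − 2/λ)‖z⁺ − z‖² + 2γ⟪∇h(x_h) − ∇h(x*), z − z⁺⟫. -/
open scoped RealInnerProductSpace

section Aux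
variable {H : Type*} [NormedAddCommGroup H] [InnerProductSpace ℝ H] [CompleteSpace H]

lemma hasGradientAt_of_fderiv {f : H → ℝ} {D : H →L[ℝ] ℝ} {u x : H}
    (h : HasFDerivAt f D x) (hu : ∀ v, D v = ⟪u, v⟫) : HasGradientAt f u x := by
  have hD : D = InnerProductSpace.toDual ℝ H u := ContinuousLinearMap.ext fun v => by
    simp [hu v]
  rw [hD] at h; exact h

lemma hasGradientAt_const_inner (u x : H) : HasGradientAt (fun w => ⟪u, w⟫) u x :=
  hasGradientAt_of_fderiv (InnerProductSpace.toDual ℝ H u).hasFDerivAt (fun v => by simp)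

lemma hasGradientAt_quad (c : ℝ) (r x : H) :
    HasGradientAt (fun w => c * ‖w - r‖ ^ 2) ((2 * c) • (x - r)) x := by
  have h0 : HasFDerivAt (fun w : H => w - r) (ContinuousLinearMap.id ℝ H) x :=
    (hasFDerivAt_id x).sub_const r
  have h1 := (h0.inner ℝ h0).const_mul c
  have heq : (fun w : H => c * ‖w - r‖ ^ 2) = fun w : H => c * ⟪w - r, w - r⟫ := by
    funext w; rw [real_inner_self_eq_norm_sq]
  rw [heq]
  refine hasGradientAt_of_fderiv h1 (fun v => ?_)
  simp [fderivInnerCLM, real_inner_smul_left, real_inner_comm]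
  rw [real_inner_smul_right]; ring

/-- Subgradient inequality at a point of differentiability, for strongly convex functions. -/
lemma strong_grad_ineq {m : ℝ} {f : H → ℝ} (hf : StrongConvexOn Set.univ m f)
    {x u : H} (hx : HasGradientAt f u x) (y : H) :
    f x + ⟪u, y - x⟫ + m / 2 * ‖y - x‖ ^ 2 ≤ f y := by
  have key : ∀ t : ℝ, t ∈ Set.Ioc (0:ℝ) 1 →
      (f (x + t • (y - x)) - f x) / t ≤ f y - f x - (1 - t) * (m / 2 * ‖y - x‖ ^ 2) := by
    intro t ht
    have h2 := hf.2 (Set.mem_univ y) (Set.mem_univ x) (le_of_lt ht.1) (by linarith [ht.2])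
      (by ring : t + (1 - t) = 1)
    have hxy : t • y + (1 - t) • x = x + t • (y - x) := by
      rw [smul_sub, sub_smul, one_smul]; abel
    rw [hxy] at h2
    rw [div_le_iff₀ ht.1]
    have hn : ‖y - x‖ = ‖x - y‖ := norm_sub_rev _ _
    simp only [smul_eq_mul] at h2
    nlinarith [h2, ht.1]
  have hc : HasDerivAt (fun t : ℝ => x + t • (y - x)) (y - x) 0 := by
    simpa using ((hasDerivAt_id (0:ℝ)).smul_const (y - x)).const_add x
  have hx' : HasFDerivAt f (InnerProductSpace.toDual ℝ H u) (x + (0:ℝ) • (y - x)) := by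
    simpa using hx.hasFDerivAt
  have hd : HasDerivAt (fun t : ℝ => f (x + t • (y - x))) ⟪u, y - x⟫ 0 := by
    have := hx'.comp_hasDerivAt (0:ℝ) hc
    exact this
  have hslope := hasDerivAt_iff_tendsto_slope.1 hd
  have hslope' : Filter.Tendsto (slope (fun t : ℝ => f (x + t • (y - x))) 0)
      (nhdsWithin 0 (Set.Ioi 0)) (nhds ⟪u, y - x⟫) :=
    hslope.mono_left (nhdsWithin_mono _ (fun t ht => by
      simp only [Set.mem_compl_iff, Set.mem_singleton_iff]
      exact ne_of_gt ht))
  have hrhs : Filter.Tendsto (fun t : ℝ => f y - f x - (1 - t) * (m / 2 * ‖y - x‖ ^ 2))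
      (nhdsWithin 0 (Set.Ioi 0)) (nhds (f y - f x - m / 2 * ‖y - x‖ ^ 2)) := by
    have hcont : Continuous (fun t : ℝ => f y - f x - (1 - t) * (m / 2 * ‖y - x‖ ^ 2)) := by
      continuity
    have h2 := (hcont.tendsto 0).mono_left (nhdsWithin_le_nhds (s := Set.Ioi (0:ℝ)))
    simpa using h2
  have hle : ⟪u, y - x⟫ ≤ f y - f x - m / 2 * ‖y - x‖ ^ 2 := by
    refine le_of_tendsto_of_tendsto hslope' hrhs ?_
    refine Filter.eventually_of_mem (Ioc_mem_nhdsGT_of_mem (by simp : (0:ℝ) ∈ Set.Ico (0:ℝ) 1))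
      (fun t ht => ?_)
    have := key t ht
    rw [slope_def_field]
    simpa using this
  linarith
end Aux

section Aux2
variable {H : Type*} [NormedAddCommGroup H] [InnerProductSpace ℝ H] [CompleteSpace H]

lemma convexOn_strongConvexOn_zero {s : Set H} {f : H → ℝ} (h : ConvexOn ℝ s f) :
    StrongConvexOn s 0 f :=
  ⟨h.1, fun x hx y hy a b ha hb hab => by simpa using h.2 hx hy ha hb hab⟩

/-- Descent lemma (no convexity needed). -/
lemma descent_lemma {f : H → ℝ} {G : H → H} (hG : ∀ x, HasGradientAt f (G x) x)
    {c : ℝ} (hc : 0 ≤ c) (hlip : ∀ a b, ‖G a - G b‖ ≤ c * ‖a - b‖) (x y : H) :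
    f y ≤ f x + ⟪G x, y - x⟫ + c / 2 * ‖y - x‖ ^ 2 := by
  set d := y - x with hd
  set φ : ℝ → ℝ := fun t => f (x + t • d) - t * ⟪G x, d⟫ - c * t ^ 2 / 2 * ‖d‖ ^ 2 with hφ
  have hder : ∀ t : ℝ, HasDerivAt φ (⟪G (x + t • d), d⟫ - ⟪G x, d⟫ - c * t * ‖d‖ ^ 2) t := by
    intro t
    have hc1 : HasDerivAt (fun s : ℝ => x + s • d) d t := by
      simpa using ((hasDerivAt_id t).smul_const d).const_add x
    have hx' : HasFDerivAt f (InnerProductSpace.toDual ℝ H (G (x + t • d))) (x + t • d) :=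
      (hG (x + t • d)).hasFDerivAt
    have h1 : HasDerivAt (fun s : ℝ => f (x + s • d)) ⟪G (x + t • d), d⟫ t := by
      have := hx'.comp_hasDerivAt t hc1
      exact this
    have h2 : HasDerivAt (fun s : ℝ => s * ⟪G x, d⟫) ⟪G x, d⟫ t := by
      simpa using (hasDerivAt_id t).mul_const ⟪G x, d⟫
    have h3 : HasDerivAt (fun s : ℝ => c * s ^ 2 / 2 * ‖d‖ ^ 2) (c * t * ‖d‖ ^ 2) t := by
      have := ((hasDerivAt_pow 2 t).const_mul c).div_const 2
      have h4 := this.mul_const (‖d‖ ^ 2)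
      have e : c * t * ‖d‖ ^ 2 = c * ((2:ℕ) * t ^ (2 - 1)) / 2 * ‖d‖ ^ 2 := by push_cast; ring
      rw [e]; exact h4
    exact (h1.sub h2).sub h3
  have hmono : AntitoneOn φ (Set.Icc (0:ℝ) 1) := by
    apply antitoneOn_of_deriv_nonpos (convex_Icc 0 1)
    · exact Continuous.continuousOn (by
        have : Differentiable ℝ φ := fun t => (hder t).differentiableAt
        exact this.continuous)
    · intro t ht
      exact (hder t).differentiableAt.differentiableWithinAt
    · intro t ht
      rw [interior_Icc] at ht
      rw [(hder t).deriv]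
      have h5 : ⟪G (x + t • d) - G x, d⟫ ≤ ‖G (x + t • d) - G x‖ * ‖d‖ :=
        real_inner_le_norm _ _
      have h6 : ‖G (x + t • d) - G x‖ ≤ c * (t * ‖d‖) := by
        have := hlip (x + t • d) x
        simpa [norm_smul, abs_of_pos ht.1] using this
      have h7 : ⟪G (x + t • d) - G x, d⟫ = ⟪G (x + t • d), d⟫ - ⟪G x, d⟫ :=
        inner_sub_left _ _ _
      nlinarith [norm_nonneg d, norm_nonneg (G (x + t • d) - G x), ht.1.le]
  have h01 := hmono (Set.mem_Icc.2 ⟨le_refl 0, zero_le_one⟩)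
    (Set.mem_Icc.2 ⟨zero_le_one, le_refl 1⟩) zero_le_one
  have he0 : φ 0 = f x := by simp [hφ]
  have he1 : φ 1 = f y - ⟪G x, d⟫ - c / 2 * ‖d‖ ^ 2 := by
    have hxd : x + (1:ℝ) • d = y := by rw [one_smul, hd]; abel
    have hr : φ 1 = f (x + (1:ℝ) • d) - 1 * ⟪G x, d⟫ - c * 1 ^ 2 / 2 * ‖d‖ ^ 2 := rfl
    rw [hr, hxd]; ring
  rw [he0, he1] at h01
  linarith

/-- Lower quadratic bound for convex functions with Lipschitz gradient. -/
lemma lower_quad {f : H → ℝ} {G : H → H} (hconv : ConvexOn ℝ Set.univ f)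
    (hG : ∀ x, HasGradientAt f (G x) x) {c : ℝ} (hc : 0 < c)
    (hlip : ∀ a b, ‖G a - G b‖ ≤ c * ‖a - b‖) (x y : H) :
    f x + ⟪G x, y - x⟫ + 1 / (2 * c) * ‖G y - G x‖ ^ 2 ≤ f y := by
  obtain ⟨φ, hφ⟩ : ∃ φ : H → ℝ, φ = fun w => f w - ⟪G x, w⟫ := ⟨_, rfl⟩
  have hGφ : ∀ w, HasGradientAt φ (G w - G x) w := by
    intro w
    have h1 := (hG w).hasFDerivAt.sub (InnerProductSpace.toDual ℝ H (G x)).hasFDerivAt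
    rw [hφ]
    exact hasGradientAt_of_fderiv h1 (fun v => by
      simp [inner_sub_left])
  have hlipφ : ∀ a b, ‖(G a - G x) - (G b - G x)‖ ≤ c * ‖a - b‖ := by
    intro a b; simpa using hlip a b
  have hmin : ∀ w, φ x ≤ φ w := by
    intro w
    have := strong_grad_ineq (convexOn_strongConvexOn_zero hconv) (hG x) w
    have h8 : ⟪G x, w - x⟫ = ⟪G x, w⟫ - ⟪G x, x⟫ := inner_sub_right _ _ _
    rw [hφ]; simp only []; linarith [this, h8]
  obtain ⟨w0, hw0⟩ : ∃ w0, w0 = y - c⁻¹ • (G y - G x) := ⟨_, rfl⟩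
  have hdesc := descent_lemma hGφ hc.le hlipφ y w0
  have he2 : w0 - y = -(c⁻¹ • (G y - G x)) := by rw [hw0]; abel
  have he3 : ⟪G y - G x, w0 - y⟫ = -(c⁻¹ * ‖G y - G x‖ ^ 2) := by
    rw [he2, inner_neg_right, real_inner_smul_right, real_inner_self_eq_norm_sq]
  have he4 : ‖w0 - y‖ ^ 2 = c⁻¹ ^ 2 * ‖G y - G x‖ ^ 2 := by
    rw [he2, norm_neg, norm_smul]
    rw [Real.norm_eq_abs, abs_of_pos (inv_pos.2 hc)]
    ring
  have hchain : φ x ≤ φ y - 1 / (2 * c) * ‖G y - G x‖ ^ 2 := by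
    have := hmin w0
    rw [he3, he4] at hdesc
    have hcc : c / 2 * (c⁻¹ ^ 2 * ‖G y - G x‖ ^ 2) - c⁻¹ * ‖G y - G x‖ ^ 2
        = -(1 / (2 * c) * ‖G y - G x‖ ^ 2) := by
      have hcn : c ≠ 0 := ne_of_gt hc
      field_simp
      ring
    linarith [hdesc, this, hcc]
  have h8 : ⟪G x, y - x⟫ = ⟪G x, y⟫ - ⟪G x, x⟫ := inner_sub_right _ _ _
  simp only [hφ] at hchain
  linarith

/-- Cocoercivity (Baillon–Haddad). -/
lemma cocoercive {f : H → ℝ} {G : H → H} (hconv : ConvexOn ℝ Set.univ f)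
    (hG : ∀ x, HasGradientAt f (G x) x) {c : ℝ} (hc : 0 < c)
    (hlip : ∀ a b, ‖G a - G b‖ ≤ c * ‖a - b‖) (x y : H) :
    (1 / c) * ‖G x - G y‖ ^ 2 ≤ ⟪G x - G y, x - y⟫ := by
  have h1 := lower_quad hconv hG hc hlip x y
  have h2 := lower_quad hconv hG hc hlip y x
  have e1 : ⟪G x, y - x⟫ = -⟪G x, x - y⟫ := by
    rw [show y - x = -(x - y) by abel, inner_neg_right]
  have e2 : ⟪G x - G y, x - y⟫ = ⟪G x, x - y⟫ - ⟪G y, x - y⟫ := inner_sub_left _ _ _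
  have e3 : ⟪G y, x - y⟫ = -⟪G y, y - x⟫ := by
    rw [show x - y = -(y - x) by abel, inner_neg_right]
  have e4 : ‖G y - G x‖ = ‖G x - G y‖ := norm_sub_rev _ _
  have e5 : (1:ℝ) / (2 * c) + 1 / (2 * c) = 1 / c := by
    rw [← add_div]
    rw [show (2:ℝ) * c = c * 2 by ring, ← div_div]
    ring
  rw [e4] at h1
  nlinarith [h1, h2]

/-- Strong monotonicity of the gradient of a strongly convex function. -/
lemma strong_mono {m : ℝ} {f : H → ℝ} (hf : StrongConvexOn Set.univ m f)
    {G : H → H} (hG : ∀ x, HasGradientAt f (G x) x) (x y : H) :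
    m * ‖x - y‖ ^ 2 ≤ ⟪G x - G y, x - y⟫ := by
  have h1 := strong_grad_ineq hf (hG x) y
  have h2 := strong_grad_ineq hf (hG y) x
  have e1 : ⟪G x, y - x⟫ = -⟪G x, x - y⟫ := by
    rw [show y - x = -(x - y) by abel, inner_neg_right]
  have e2 : ⟪G x - G y, x - y⟫ = ⟪G x, x - y⟫ - ⟪G y, x - y⟫ := inner_sub_left _ _ _
  have e3 : ⟪G y, x - y⟫ = -⟪G y, y - x⟫ := by
    rw [show x - y = -(y - x) by abel, inner_neg_right]
  have e4 : ‖y - x‖ = ‖x - y‖ := norm_sub_rev _ _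
  rw [e4] at h1
  nlinarith [h1, h2]

end Aux2

section Aux3
variable {H : Type*} [NormedAddCommGroup H] [InnerProductSpace ℝ H] [CompleteSpace H]

/-- Strong prox subgradient inequality. -/
lemma prox_strong_ineq {m γ : ℝ} (hγ : 0 < γ) (hm : 0 ≤ m) {f : H → ℝ}
    (hf : StrongConvexOn Set.univ m f) {x p : H}
    (hp : IsMinOn (fun y => f y + (1 / (2 * γ)) * ‖y - x‖ ^ 2) Set.univ p) (y : H) :
    f p + m / 2 * ‖y - p‖ ^ 2 ≤ f y + (1 / γ) * ⟪p - x, y - p⟫ := by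
  obtain ⟨N, hN⟩ : ∃ N, N = ‖y - p‖ ^ 2 := ⟨_, rfl⟩
  have hN0 : 0 ≤ N := hN ▸ (by positivity)
  rw [← hN]
  refine le_of_forall_pos_le_add (fun ε hε => ?_)
  obtain ⟨B, hB⟩ : ∃ B, B = (m / 2 + 1 / (2 * γ)) * N + 1 := ⟨_, rfl⟩
  have hB0 : 0 < B := by rw [hB]; positivity
  obtain ⟨t, ht⟩ : ∃ t, t = min 1 (ε / B) := ⟨_, rfl⟩
  have ht0 : 0 < t := ht ▸ lt_min one_pos (div_pos hε hB0)
  have ht1 : t ≤ 1 := ht ▸ min_le_left _ _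
  have htB : t * ((m / 2 + 1 / (2 * γ)) * N) ≤ ε := by
    have h1 : t ≤ ε / B := ht ▸ min_le_right _ _
    have h2 : (m / 2 + 1 / (2 * γ)) * N ≤ B := by rw [hB]; linarith
    have h3 : 0 ≤ (m / 2 + 1 / (2 * γ)) * N := by positivity
    calc t * ((m / 2 + 1 / (2 * γ)) * N) ≤ (ε / B) * B :=
          mul_le_mul h1 h2 h3 (le_of_lt (div_pos hε hB0))
      _ = ε := div_mul_cancel₀ ε (ne_of_gt hB0)
  have hmin := isMinOn_iff.1 hp (t • y + (1 - t) • p) (Set.mem_univ _)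
  have hsc := hf.2 (Set.mem_univ y) (Set.mem_univ p) ht0.le (by linarith : (0:ℝ) ≤ 1 - t)
    (by ring : t + (1 - t) = 1)
  have hq : ‖(t • y + (1 - t) • p) - x‖ ^ 2
      = ‖p - x‖ ^ 2 + 2 * (t * ⟪p - x, y - p⟫) + t ^ 2 * N := by
    have he : (t • y + (1 - t) • p) - x = (p - x) + t • (y - p) := by
      rw [sub_smul, one_smul, smul_sub]; abel
    rw [he, norm_add_sq_real, real_inner_smul_right, norm_smul, Real.norm_eq_abs,
      abs_of_pos ht0, mul_pow, hN]
  simp only [smul_eq_mul] at hsc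
  have hcomb : f p + (1 / (2 * γ)) * ‖p - x‖ ^ 2
      ≤ t * f y + (1 - t) * f p - t * (1 - t) * (m / 2 * N)
        + (1 / (2 * γ)) * (‖p - x‖ ^ 2 + 2 * (t * ⟪p - x, y - p⟫) + t ^ 2 * N) := by
    have := hmin
    rw [hq] at this
    have hsc' := hsc
    rw [hN] at *
    nlinarith [this, hsc']
  have hkey : f p + m / 2 * N - f y - (1 / γ) * ⟪p - x, y - p⟫
      ≤ t * ((m / 2 + 1 / (2 * γ)) * N) := by
    have hmul : t * (f p + m / 2 * N - f y - (1 / γ) * ⟪p - x, y - p⟫)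
        ≤ t * (t * ((m / 2 + 1 / (2 * γ)) * N)) := by
      have hγ' : (1 : ℝ) / γ = 2 * (1 / (2 * γ)) := by field_simp
      rw [hγ']
      nlinarith [hcomb]
    exact le_of_mul_le_mul_left hmul ht0
  linarith

/-- At the prox point the gradient of `f` equals `(x - p)/γ`. -/
lemma prox_grad_eq {γ : ℝ} (hγ : 0 < γ) {f : H → ℝ} {G : H → H}
    (hG : ∀ w, HasGradientAt f (G w) w) {x p : H}
    (hp : IsMinOn (fun y => f y + (1 / (2 * γ)) * ‖y - x‖ ^ 2) Set.univ p) :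
    G p = (1 / γ) • (x - p) := by
  have hquad := hasGradientAt_quad (1 / (2 * γ)) x p
  have hF : HasGradientAt (fun y => f y + (1 / (2 * γ)) * ‖y - x‖ ^ 2)
      (G p + (2 * (1 / (2 * γ))) • (p - x)) p := by
    have h1 := (hG p).hasFDerivAt.add hquad.hasFDerivAt
    exact hasGradientAt_of_fderiv h1 (fun v => by
      simp [inner_add_left, real_inner_smul_left, inner_sub_left])
  have hloc : IsLocalMin (fun y => f y + (1 / (2 * γ)) * ‖y - x‖ ^ 2) p :=
    hp.isLocalMin Filter.univ_mem
  have h0 := hloc.hasFDerivAt_eq_zero hF.hasFDerivAt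
  have hv : G p + (2 * (1 / (2 * γ))) • (p - x) = 0 := by
    have h1 : InnerProductSpace.toDual ℝ H (G p + (2 * (1 / (2 * γ))) • (p - x)) = 0 := h0
    simpa using (InnerProductSpace.toDual ℝ H).map_eq_zero_iff.1 h1
  have hc : (2 * (1 / (2 * γ))) = 1 / γ := by field_simp
  rw [hc] at hv
  have h2 : G p = -((1 / γ) • (p - x)) := eq_neg_of_add_eq_zero_left hv
  rw [h2, ← smul_neg, neg_sub]

end Aux3

set_option maxHeartbeats 1000000 in
/-- the strong-convexity fundamental inequality. -/
theorem fdrs_strong_convexity_fundamental_inequality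
    {H : Type*} [NormedAddCommGroup H] [InnerProductSpace ℝ H] [CompleteSpace H]
    (V : Submodule ℝ H) [CompleteSpace V]
    (PV : H → H) (hPV : ∀ x, PV x = (V.orthogonalProjectionOnto x : H))
    (f g : H → ℝ) (gradg gradh gradf proxf : H → H)
    (β βV γ : ℝ) (hβ : 0 < β) (hβV : 0 < βV) (hγ : 0 < γ)
    (hfconv : ConvexOn ℝ Set.univ f) (hfcont : Continuous f)
    (hgconv : ConvexOn ℝ Set.univ g)
    (hgdiff : ∀ x, HasGradientAt g (gradg x) x)
    (hglip : LipschitzWith (1 / β).toNNReal gradg)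
    (hgradh : ∀ x, gradh x = PV (gradg (PV x)))
    (hgradhlip : LipschitzWith (1 / βV).toNNReal gradh)
    (hprox : ∀ x, IsMinOn (fun y => f y + (1 / (2 * γ)) * ‖y - x‖ ^ 2) Set.univ (proxf x))
    (T : H → H)
    (hT : ∀ z, T z = (1 / 2 : ℝ) • (z - γ • gradh z)
        + (1 / 2 : ℝ) • ((2 : ℝ) • proxf ((2 : ℝ) • PV (z - γ • gradh z) - (z - γ • gradh z))
            - ((2 : ℝ) • PV (z - γ • gradh z) - (z - γ • gradh z))))
    -- strong convexity / smoothness constants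
    (μf μg βf : ℝ) (hμf : 0 ≤ μf) (hμg : 0 ≤ μg) (hβf : 0 ≤ βf)
    (hfstrong : StrongConvexOn Set.univ μf f)
    (hgstrong : StrongConvexOn Set.univ μg g)
    (hfgrad : 0 < βf → ∀ x, HasGradientAt f (gradf x) x)
    (hfgradlip : 0 < βf → LipschitzWith (1 / βf).toNNReal gradf)
    (Sf Sh : H → H → ℝ)
    (hSf : ∀ x y, Sf x y = if 0 < βf then
        max (μf / 2 * ‖x - y‖ ^ 2) (βf / 2 * ‖gradf x - gradf y‖ ^ 2)
      else μf / 2 * ‖x - y‖ ^ 2)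
    (hSh : ∀ x y, Sh x y
        = max (μg / 2 * ‖PV x - PV y‖ ^ 2) (βV / 2 * ‖gradh x - gradh y‖ ^ 2))
    -- z, λ, z⁺, the fixed point z*, and the associated points
    (z zp xh xf zs xs : H) (lam : ℝ) (hlam : 0 < lam)
    (hzp : zp = (1 - lam) • z + lam • T z)
    (hzs : T zs = zs) (hxs : xs = PV zs)
    (hxh : xh = PV z)
    (hxf : xf = proxf ((2 : ℝ) • PV (z - γ • gradh z) - (z - γ • gradh z))) :
    4 * γ * lam * (Sf xf xs + Sh xh xs)
      ≤ ‖z - zs‖ ^ 2 - ‖zp - zs‖ ^ 2 + (1 - 2 / lam) * ‖zp - z‖ ^ 2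
        + 2 * γ * ⟪gradh xh - gradh xs, z - zp⟫ := by
  -- basic projection facts
  have Psub : ∀ a b : H, PV (a - b) = PV a - PV b := by
    intro a b; simp [hPV, map_sub]
  have Psmul : ∀ (c : ℝ) (a : H), PV (c • a) = c • PV a := by
    intro c a; simp [hPV, map_smul]
  have Pidem : ∀ u : H, PV (PV u) = PV u := by
    intro u; simp [hPV, Submodule.starProjection_eq_self_iff]
  have hPVgradh : ∀ u : H, PV (gradh u) = gradh u := by
    intro u; rw [hgradh u, Pidem]
  -- gradient of h is well defined at points with same projection
  have hgz : gradh z = gradh xh := by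
    rw [hgradh z, hgradh xh, hxh, Pidem]
  have hgzs : gradh zs = gradh xs := by
    rw [hgradh zs, hgradh xs, hxs, Pidem]
  -- simplified form of T
  have hPw : ∀ u : H, PV (u - γ • gradh u) = PV u - γ • gradh u := by
    intro u; rw [Psub, Psmul, hPVgradh]
  have hTz : ∀ u : H, T u
      = u - PV u + proxf ((2 : ℝ) • PV (u - γ • gradh u) - (u - γ • gradh u)) := by
    intro u
    rw [hT u]
    generalize proxf ((2 : ℝ) • PV (u - γ • gradh u) - (u - γ • gradh u)) = pr
    rw [hPw u]
    module
  -- the fixed point satisfies proxf Rzs = xs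
  obtain ⟨Rz, hRz⟩ : ∃ R, R = (2 : ℝ) • PV (z - γ • gradh z) - (z - γ • gradh z) := ⟨_, rfl⟩
  obtain ⟨Rzs, hRzs⟩ : ∃ R, R = (2 : ℝ) • PV (zs - γ • gradh zs) - (zs - γ • gradh zs) := ⟨_, rfl⟩
  have hfix : xs = proxf Rzs := by
    have h := hzs
    rw [hTz zs] at h
    have h2 : proxf ((2 : ℝ) • PV (zs - γ • gradh zs) - (zs - γ • gradh zs))
        = zs - (zs - PV zs) := by
      rw [eq_sub_iff_add_eq, add_comm]; exact h
    rw [hxs, hRzs, h2, sub_sub_cancel]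
  have hxf' : xf = proxf Rz := by rw [hxf, hRz]
  -- prox minimality at xf and xs
  have hprox1 : IsMinOn (fun y => f y + (1 / (2 * γ)) * ‖y - Rz‖ ^ 2) Set.univ xf := by
    rw [hxf']; exact hprox Rz
  have hprox2 : IsMinOn (fun y => f y + (1 / (2 * γ)) * ‖y - Rzs‖ ^ 2) Set.univ xs := by
    rw [hfix]; exact hprox Rzs
  -- abbreviations
  obtain ⟨p, hp⟩ : ∃ p, p = xh - xs := ⟨_, rfl⟩
  obtain ⟨q, hq⟩ : ∃ q, q = xh - xf := ⟨_, rfl⟩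
  obtain ⟨wv, hwv⟩ : ∃ w, w = z - zs := ⟨_, rfl⟩
  obtain ⟨Δ, hΔ⟩ : ∃ d, d = gradh xh - gradh xs := ⟨_, rfl⟩
  obtain ⟨A, hA⟩ : ∃ A, A = ⟪(Rz - xf) - (Rzs - xs), xf - xs⟫ := ⟨_, rfl⟩
  -- vector identities
  have hvA : (Rz - xf) - (Rzs - xs) = p + q - wv - γ • Δ := by
    rw [hRz, hRzs, hPw z, hPw zs, hgz, hgzs, ← hxh, ← hxs, hp, hq, hwv, hΔ]
    module
  have hvfx : xf - xs = p - q := by rw [hp, hq]; module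
  have hvq : z - zp = lam • q := by
    rw [hzp, hTz z, ← hxh, ← hRz, ← hxf', hq]
    module
  have hvzp : zp - zs = wv - lam • q := by
    have : zp - zs = (z - zs) - (z - zp) := by module
    rw [this, hvq, hwv]
  have hvzpz : zp - z = -(lam • q) := by
    have : zp - z = -(z - zp) := by module
    rw [this, hvq]
  -- projection inner product identity
  have hPwv : p = PV wv := by rw [hp, hwv, Psub, hxh, hxs]
  have hwp : ⟪wv, p⟫ = ‖p‖ ^ 2 := by
    have h1 : ⟪wv - PV wv, PV wv⟫ = 0 := by
      rw [hPV]
      exact Submodule.starProjection_inner_eq_zero (K := V) wv _ (SetLike.coe_mem _)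
    rw [inner_sub_left, ← hPwv, real_inner_self_eq_norm_sq] at h1
    linarith
  -- Lipschitz bounds as norms
  have hlip_h : ∀ a b : H, ‖gradh a - gradh b‖ ≤ (1 / βV) * ‖a - b‖ := by
    intro a b
    have h1 := hgradhlip.dist_le_mul a b
    rw [dist_eq_norm, dist_eq_norm] at h1
    rwa [Real.coe_toNNReal _ (by positivity)] at h1
  -- h = g ∘ PV is convex with gradient gradh
  have hPlincomb : ∀ (s t : ℝ) (a b : H), PV (s • a + t • b) = s • PV a + t • PV b := by
    intro s t a b; simp [hPV, map_add, map_smul]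
  have hconvh : ConvexOn ℝ Set.univ (fun u => g (PV u)) := by
    refine ⟨convex_univ, fun a _ b _ s t hs ht hst => ?_⟩
    simp only [hPlincomb]
    exact hgconv.2 (Set.mem_univ _) (Set.mem_univ _) hs ht hst
  have hgradh_at : ∀ u : H, HasGradientAt (fun u => g (PV u)) (gradh u) u := by
    intro u
    set PL : H →L[ℝ] H := V.subtypeL.comp V.orthogonalProjectionOnto with hPLdef
    have hPL : ∀ v, PL v = PV v := by intro v; simp [hPLdef, hPV]
    have hgd : HasFDerivAt g (InnerProductSpace.toDual ℝ H (gradg (PL u))) (PL u) :=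
      (hgdiff (PL u)).hasFDerivAt
    have hcomp := hgd.comp u PL.hasFDerivAt
    have hfun : (g ∘ PL) = fun v => g (PV v) := funext fun v => by simp [hPL v]
    rw [hfun] at hcomp
    refine hasGradientAt_of_fderiv hcomp (fun v => ?_)
    rw [hgradh u]
    simp only [ContinuousLinearMap.coe_comp', Function.comp_apply,
      InnerProductSpace.toDual_apply_apply]
    simp only [hPL, hPV]
    exact (Submodule.inner_starProjection_left_eq_right V _ _).symm
  -- bound for Sh
  have hShB : 2 * Sh xh xs ≤ ⟪Δ, xh - xs⟫ := by
    have hco := cocoercive hconvh hgradh_at (c := 1 / βV) (by positivity) hlip_h xh xs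
    rw [one_div_one_div] at hco
    have hmono := strong_mono hgstrong hgdiff (PV xh) (PV xs)
    have Pinner : ∀ a b : H, ⟪PV a, b⟫ = ⟪a, PV b⟫ := by
      intro a b; simp only [hPV]; exact Submodule.inner_starProjection_left_eq_right V a b
    have hmove : ⟪gradh xh - gradh xs, xh - xs⟫
        = ⟪gradg (PV xh) - gradg (PV xs), PV xh - PV xs⟫ := by
      rw [hgradh xh, hgradh xs, ← Psub, Pinner, Psub]
    rw [hSh, hΔ]
    have h2 : 2 * max (μg / 2 * ‖PV xh - PV xs‖ ^ 2) (βV / 2 * ‖gradh xh - gradh xs‖ ^ 2)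
        = max (μg * ‖PV xh - PV xs‖ ^ 2) (βV * ‖gradh xh - gradh xs‖ ^ 2) := by
      rw [mul_max_of_nonneg _ _ (by norm_num : (0:ℝ) ≤ 2)]; ring_nf
    rw [h2]
    apply max_le
    · rw [hmove]; exact hmono
    · exact hco
  -- bound for Sf
  have hγ1 : γ * (1 / γ) = 1 := by field_simp
  have hSfA : 2 * γ * Sf xf xs ≤ A := by
    have hp1 := prox_strong_ineq hγ hμf hfstrong hprox1 xs
    have hp2 := prox_strong_ineq hγ hμf hfstrong hprox2 xf
    have e1 : ⟪xf - Rz, xs - xf⟫ = ⟪Rz - xf, xf - xs⟫ := by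
      rw [show xf - Rz = -(Rz - xf) by abel, show xs - xf = -(xf - xs) by abel, inner_neg_neg]
    have e2 : ⟪xs - Rzs, xf - xs⟫ = -⟪Rzs - xs, xf - xs⟫ := by
      rw [show xs - Rzs = -(Rzs - xs) by abel, inner_neg_left]
    have e3 : A = ⟪Rz - xf, xf - xs⟫ - ⟪Rzs - xs, xf - xs⟫ := by
      rw [hA]; exact inner_sub_left _ _ _
    have e4 : ‖xs - xf‖ = ‖xf - xs‖ := norm_sub_rev _ _
    rw [e1] at hp1
    rw [e2] at hp2
    rw [e4] at hp1
    -- μf bound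
    have hmu : 2 * γ * (μf / 2 * ‖xf - xs‖ ^ 2) ≤ A := by
      have hsum : μf * ‖xf - xs‖ ^ 2 ≤ (1 / γ) * A := by
        rw [e3]; nlinarith [hp1, hp2]
      have h5 := mul_le_mul_of_nonneg_left hsum hγ.le
      have h6 : γ * ((1 / γ) * A) = A := by rw [← mul_assoc, hγ1, one_mul]
      nlinarith [h5, h6]
    rw [hSf]
    split_ifs with hbf
    · -- βf > 0 case
      have hlip_f : ∀ a b : H, ‖gradf a - gradf b‖ ≤ (1 / βf) * ‖a - b‖ := by
        intro a b
        have h1 := (hfgradlip hbf).dist_le_mul a b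
        rw [dist_eq_norm, dist_eq_norm] at h1
        rwa [Real.coe_toNNReal _ (by positivity)] at h1
      have hg1 : gradf xf = (1 / γ) • (Rz - xf) := prox_grad_eq hγ (hfgrad hbf) hprox1
      have hg2 : gradf xs = (1 / γ) • (Rzs - xs) := prox_grad_eq hγ (hfgrad hbf) hprox2
      have hco := cocoercive hfconv (hfgrad hbf) (c := 1 / βf) (by positivity) hlip_f xf xs
      rw [one_div_one_div] at hco
      have e5 : gradf xf - gradf xs = (1 / γ) • ((Rz - xf) - (Rzs - xs)) := by
        rw [hg1, hg2, ← smul_sub]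
      have e6 : ⟪gradf xf - gradf xs, xf - xs⟫ = (1 / γ) * A := by
        rw [e5, real_inner_smul_left, hA]
      rw [e6] at hco
      have hbeta : 2 * γ * (βf / 2 * ‖gradf xf - gradf xs‖ ^ 2) ≤ A := by
        have h5 := mul_le_mul_of_nonneg_left hco hγ.le
        have h6 : γ * ((1 / γ) * A) = A := by rw [← mul_assoc, hγ1, one_mul]
        nlinarith [h5, h6]
      have h7 : 2 * γ * max (μf / 2 * ‖xf - xs‖ ^ 2) (βf / 2 * ‖gradf xf - gradf xs‖ ^ 2)
          = max (2 * γ * (μf / 2 * ‖xf - xs‖ ^ 2))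
              (2 * γ * (βf / 2 * ‖gradf xf - gradf xs‖ ^ 2)) := by
        rw [mul_max_of_nonneg _ _ (by positivity : (0:ℝ) ≤ 2 * γ)]
      rw [h7]
      exact max_le hmu hbeta
    · exact hmu
  -- final algebra
  obtain ⟨I1, hI1⟩ : ∃ I, I = ⟪wv, q⟫ := ⟨_, rfl⟩
  obtain ⟨I2, hI2⟩ : ∃ I, I = ⟪Δ, q⟫ := ⟨_, rfl⟩
  obtain ⟨I3, hI3⟩ : ∃ I, I = ⟪Δ, p⟫ := ⟨_, rfl⟩
  have hBe : ⟪Δ, xh - xs⟫ = I3 := by rw [hI3, hp]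
  rw [hBe] at hShB
  have hAe : A = ‖p‖ ^ 2 - ‖q‖ ^ 2 - ‖p‖ ^ 2 - γ * I3 + I1 + γ * I2 := by
    rw [hA, hvA, hvfx]
    simp only [inner_sub_left, inner_add_left, inner_sub_right, real_inner_smul_left]
    rw [real_inner_self_eq_norm_sq, real_inner_self_eq_norm_sq,
      real_inner_comm q p, ← hwp, hI1, hI2, hI3]
    ring
  have hZ1 : ‖zp - zs‖ ^ 2 = ‖wv‖ ^ 2 - 2 * (lam * I1) + lam ^ 2 * ‖q‖ ^ 2 := by
    rw [hvzp, norm_sub_sq_real, real_inner_smul_right, norm_smul, Real.norm_eq_abs,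
      mul_pow, sq_abs, hI1]
  have hZ2 : ‖zp - z‖ ^ 2 = lam ^ 2 * ‖q‖ ^ 2 := by
    rw [hvzpz, norm_neg, norm_smul, Real.norm_eq_abs, mul_pow, sq_abs]
  have hZ3 : ⟪gradh xh - gradh xs, z - zp⟫ = lam * I2 := by
    rw [← hΔ, hvq, real_inner_smul_right, hI2]
  have hzzs : ‖z - zs‖ ^ 2 = ‖wv‖ ^ 2 := by rw [hwv]
  rw [hZ3, hzzs, hZ1, hZ2]
  have hlam2 : (1 - 2 / lam) * (lam ^ 2 * ‖q‖ ^ 2) = lam ^ 2 * ‖q‖ ^ 2 - 2 * lam * ‖q‖ ^ 2 := by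
    field_simp
  rw [hlam2]
  have m1 := mul_le_mul_of_nonneg_left hSfA (le_of_lt hlam)
  have m2 := mul_le_mul_of_nonneg_left hShB (by positivity : (0:ℝ) ≤ γ * lam)
  have hAe' : lam * A = lam * (‖p‖ ^ 2 - ‖q‖ ^ 2 - ‖p‖ ^ 2 - γ * I3 + I1 + γ * I2) := by
    rw [hAe]
  nlinarith [m1, m2, hAe']
end

section
/- (Gradient summability.) Let γ ∈ (0, 2β_V), let ε ∈ (0,1), and suppose (λ_k)_{k≥0} ⊆ (0, (1−ε)(1+εα)/α). Then for the FDRS iterates (z^k): Σ_{i=0}^∞ λ_i ‖∇h(z^i) − ∇h(z*)‖² ≤ (1+ε)‖z⁰ − z*‖² / (γε(2β_V − γ)). -/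
open scoped RealInnerProductSpace
open Filter Topology

section AuxFDRS
variable {H : Type*} [NormedAddCommGroup H] [InnerProductSpace ℝ H] [CompleteSpace H]

/-- Derivative of a gradient-differentiable function along a line. -/
lemma fdrs_line_hasDerivAt (φ : H → ℝ) {φ' : H} (x d : H) (t : ℝ)
    (h : HasGradientAt φ φ' (x + t • d)) :
    HasDerivAt (fun s : ℝ => φ (x + s • d)) ⟪φ', d⟫ t := by
  have hline : HasDerivAt (fun s : ℝ => x + s • d) d t := by
    simpa using ((hasDerivAt_id t).smul_const d).const_add x
  have := (h.hasFDerivAt).comp_hasDerivAt t hline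
  simpa [InnerProductSpace.toDual_apply_apply, Function.comp_def] using this

/-- First-order condition for convex functions. -/
lemma fdrs_convex_grad_ineq (φ : H → ℝ) (hc : ConvexOn ℝ Set.univ φ)
    {φ' x : H} (h : HasGradientAt φ φ' x) (y : H) :
    φ x + ⟪φ', y - x⟫ ≤ φ y := by
  set d := y - x with hd
  have hq : HasDerivAt (fun s : ℝ => φ (x + s • d)) ⟪φ', d⟫ 0 := by
    apply fdrs_line_hasDerivAt φ x d 0
    simpa using h
  have hslope : Tendsto (fun t : ℝ => (φ (x + t • d) - φ x) / t) (𝓝[>] 0) (𝓝 ⟪φ', d⟫) := by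
    have h1 := hq.tendsto_slope_zero_right
    simpa [slope_def_field, div_eq_inv_mul, d] using h1
  have hbound : ∀ᶠ t in 𝓝[>] (0:ℝ), (φ (x + t • d) - φ x) / t ≤ φ y - φ x := by
    filter_upwards [Ioc_mem_nhdsGT_of_mem (by norm_num : (0:ℝ) ∈ Set.Ico (0:ℝ) 1)] with t ht
    have ht0 : 0 < t := ht.1
    have ht1 : t ≤ 1 := ht.2
    have hcomb : x + t • d = (1 - t) • x + t • y := by
      rw [hd]; module
    have hcv := hc.2 (Set.mem_univ x) (Set.mem_univ y) (by linarith : (0:ℝ) ≤ 1 - t)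
      (le_of_lt ht0) (by ring)
    rw [smul_eq_mul, smul_eq_mul] at hcv
    rw [hcomb]
    rw [div_le_iff₀ ht0]
    calc φ ((1 - t) • x + t • y) - φ x ≤ (1 - t) * φ x + t * φ y - φ x := by linarith [hcv]
      _ = (φ y - φ x) * t := by ring
  have := le_of_tendsto hslope hbound
  linarith [this]

/-- Descent lemma. -/
lemma fdrs_descent_lemma (φ : H → ℝ) (φ' : H → H) (h : ∀ x, HasGradientAt φ (φ' x) x)
    {L : ℝ} (hL : 0 ≤ L) (hlip : ∀ a b, ‖φ' a - φ' b‖ ≤ L * ‖a - b‖) (x y : H) :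
    φ y ≤ φ x + ⟪φ' x, y - x⟫ + L / 2 * ‖y - x‖ ^ 2 := by
  set d := y - x with hd
  have hcontphi' : Continuous φ' := by
    have : LipschitzWith (Real.toNNReal L) φ' := by
      apply LipschitzWith.of_dist_le_mul
      intro a b
      calc dist (φ' a) (φ' b) = ‖φ' a - φ' b‖ := dist_eq_norm _ _
        _ ≤ L * ‖a - b‖ := hlip a b
        _ ≤ (Real.toNNReal L) * dist a b := by
            rw [dist_eq_norm]
            gcongr
            exact Real.le_coe_toNNReal L
    exact this.continuous
  have hline : Continuous fun t : ℝ => x + t • d := by continuity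
  have hq' : Continuous fun t : ℝ => ⟪φ' (x + t • d), d⟫ :=
    (Continuous.inner (hcontphi'.comp hline) continuous_const)
  have hderiv : ∀ t ∈ Set.uIcc (0:ℝ) 1,
      HasDerivAt (fun s : ℝ => φ (x + s • d)) ⟪φ' (x + t • d), d⟫ t :=
    fun t _ => fdrs_line_hasDerivAt φ x d t (h _)
  have hint : IntervalIntegrable (fun t : ℝ => ⟪φ' (x + t • d), d⟫)
      MeasureTheory.volume 0 1 := hq'.intervalIntegrable 0 1
  have hftc : ∫ t in (0:ℝ)..1, ⟪φ' (x + t • d), d⟫ = φ y - φ x := by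
    have := intervalIntegral.integral_eq_sub_of_hasDerivAt hderiv hint
    simpa [hd] using this
  have hmono : ∫ t in (0:ℝ)..1, ⟪φ' (x + t • d), d⟫
      ≤ ∫ t in (0:ℝ)..1, (⟪φ' x, d⟫ + L * ‖d‖ ^ 2 * t) := by
    apply intervalIntegral.integral_mono_on (by norm_num) hint
    · exact (continuous_const.add (continuous_const.mul continuous_id')).intervalIntegrable 0 1
    · intro t ht
      have h1 : ⟪φ' (x + t • d) - φ' x, d⟫ ≤ L * ‖d‖ ^ 2 * t := by
        calc ⟪φ' (x + t • d) - φ' x, d⟫ ≤ ‖φ' (x + t • d) - φ' x‖ * ‖d‖ :=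
              real_inner_le_norm _ _
          _ ≤ (L * ‖x + t • d - x‖) * ‖d‖ :=
              mul_le_mul_of_nonneg_right (hlip _ _) (norm_nonneg _)
          _ = L * ‖d‖ ^ 2 * t := by
              have : x + t • d - x = t • d := by abel
              rw [this, norm_smul, Real.norm_eq_abs, abs_of_nonneg ht.1]
              ring
      have := inner_sub_left (𝕜 := ℝ) (φ' (x + t • d)) (φ' x) d
      rw [this] at h1
      linarith
  have hval : ∫ t in (0:ℝ)..1, (⟪φ' x, d⟫ + L * ‖d‖ ^ 2 * t) = ⟪φ' x, d⟫ + L / 2 * ‖d‖ ^ 2 := by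
    rw [intervalIntegral.integral_add (f := fun _ => ⟪φ' x, d⟫) (g := fun t => L * ‖d‖ ^ 2 * t) (continuous_const.intervalIntegrable 0 1)
      ((continuous_const.mul continuous_id').intervalIntegrable 0 1),
      intervalIntegral.integral_const_mul, intervalIntegral.integral_const, integral_id]
    norm_num; ring
  rw [hftc, hval] at hmono
  linarith

lemma fdrs_hasGradientAt_sub_inner (φ : H → ℝ) {φ' : H} {w : H}
    (h : HasGradientAt φ φ' w) (c : H) :
    HasGradientAt (fun u => φ u - ⟪c, u⟫) (φ' - c) w := by
  rw [hasGradientAt_iff_hasFDerivAt] at h ⊢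
  have hc : HasFDerivAt (fun u : H => (⟪c, u⟫ : ℝ))
      ((InnerProductSpace.toDual ℝ H c) : H →L[ℝ] ℝ) w := by
    have := ((InnerProductSpace.toDual ℝ H c) : H →L[ℝ] ℝ).hasFDerivAt (x := w)
    exact this
  have h2 := h.sub hc
  rw [map_sub]
  exact h2

/-- Baillon–Haddad: cocoercivity of the gradient. -/
lemma fdrs_baillon_haddad (φ : H → ℝ) (hc : ConvexOn ℝ Set.univ φ)
    (φ' : H → H) (h : ∀ x, HasGradientAt φ (φ' x) x) {β : ℝ} (hβ : 0 < β)
    (hlip : ∀ a b, ‖φ' a - φ' b‖ ≤ (1 / β) * ‖a - b‖) (x y : H) :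
    β * ‖φ' x - φ' y‖ ^ 2 ≤ ⟪φ' x - φ' y, x - y⟫ := by
  have key : ∀ a b : H, φ a - ⟪φ' a, a⟫ + β / 2 * ‖φ' b - φ' a‖ ^ 2 ≤ φ b - ⟪φ' a, b⟫ := by
    intro a b
    set A : H → ℝ := fun u => φ u - ⟪φ' a, u⟫ with hA
    set A' : H → H := fun u => φ' u - φ' a with hA'
    have hAgrad : ∀ u, HasGradientAt A (A' u) u := fun u =>
      fdrs_hasGradientAt_sub_inner φ (h u) (φ' a)
    have hAlip : ∀ u v, ‖A' u - A' v‖ ≤ (1 / β) * ‖u - v‖ := by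
      intro u v; simpa [hA', sub_sub_sub_cancel_right] using hlip u v
    have hmin : ∀ u, A a ≤ A u := by
      intro u
      have hh : ⟪φ' a, u⟫ - ⟪φ' a, a⟫ = ⟪φ' a, u - a⟫ := by
        rw [inner_sub_right]
      simp only [hA]
      linarith [fdrs_convex_grad_ineq φ hc (h a) u, hh]
    have hdesc := fdrs_descent_lemma A A' hAgrad (by positivity) hAlip b (b - β • A' b)
    have h1 : (b - β • A' b) - b = -(β • A' b) := by abel
    rw [h1] at hdesc
    have h2 : ⟪A' b, -(β • A' b)⟫ = -β * ‖A' b‖ ^ 2 := by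
      rw [inner_neg_right, real_inner_smul_right, real_inner_self_eq_norm_sq]; ring
    have h3 : ‖-(β • A' b)‖ ^ 2 = β ^ 2 * ‖A' b‖ ^ 2 := by
      rw [norm_neg, norm_smul, Real.norm_eq_abs, abs_of_pos hβ, mul_pow]
    rw [h2, h3] at hdesc
    have h4 := hmin (b - β • A' b)
    have h5 : A a ≤ A b - β / 2 * ‖A' b‖ ^ 2 := by
      calc A a ≤ A (b - β • A' b) := h4
        _ ≤ A b + (-β * ‖A' b‖ ^ 2) + 1 / β / 2 * (β ^ 2 * ‖A' b‖ ^ 2) := hdesc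
        _ = A b - β / 2 * ‖A' b‖ ^ 2 := by field_simp; ring
    simp only [hA, hA'] at h5
    linarith [h5]
  have k1 := key x y
  have k2 := key y x
  have e1 : ‖φ' y - φ' x‖ = ‖φ' x - φ' y‖ := norm_sub_rev _ _
  rw [e1] at k1
  have expand : ⟪φ' x - φ' y, x - y⟫
      = ⟪φ' x, x⟫ - ⟪φ' x, y⟫ - ⟪φ' y, x⟫ + ⟪φ' y, y⟫ := by
    rw [inner_sub_left, inner_sub_right, inner_sub_right]; ring
  linarith [k1, k2, expand]

/-- Variational inequality for the prox point. -/
lemma fdrs_prox_var_ineq (f : H → ℝ) (hfconv : ConvexOn ℝ Set.univ f) {γ : ℝ} (hγ : 0 < γ)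
    {x p : H} (hmin : IsMinOn (fun y => f y + (1 / (2 * γ)) * ‖y - x‖ ^ 2) Set.univ p)
    (y : H) : ⟪x - p, y - p⟫ ≤ γ * (f y - f p) := by
  set c : ℝ := 1 / (2 * γ) with hc
  have hc0 : 0 < c := by positivity
  have key : ∀ t : ℝ, t ∈ Set.Ioc (0:ℝ) 1 →
      0 ≤ f y - f p + 2 * c * ⟪p - x, y - p⟫ + c * t * ‖y - p‖ ^ 2 := by
    intro t ht
    have ht0 := ht.1
    have hmt := hmin (Set.mem_univ (p + t • (y - p)))
    simp only [Set.mem_setOf_eq] at hmt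
    have hcomb : p + t • (y - p) = (1 - t) • p + t • y := by module
    have hconv := hfconv.2 (Set.mem_univ p) (Set.mem_univ y)
      (by linarith [ht.2] : (0:ℝ) ≤ 1 - t) (le_of_lt ht0) (by ring)
    rw [smul_eq_mul, smul_eq_mul] at hconv
    have hnorm : ‖p + t • (y - p) - x‖ ^ 2
        = ‖p - x‖ ^ 2 + 2 * t * ⟪p - x, y - p⟫ + t ^ 2 * ‖y - p‖ ^ 2 := by
      have : p + t • (y - p) - x = (p - x) + t • (y - p) := by abel
      rw [this, norm_add_sq_real, real_inner_smul_right, norm_smul, Real.norm_eq_abs,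
        abs_of_pos ht0, mul_pow]
      ring
    have hf1 : f p + c * ‖p - x‖ ^ 2 ≤ f (p + t • (y - p)) + c * ‖p + t • (y - p) - x‖ ^ 2 := hmt
    have hf2 : f (p + t • (y - p)) ≤ (1 - t) * f p + t * f y := by rw [hcomb]; exact hconv
    rw [hnorm] at hf1
    have h0 : 0 ≤ t * (f y - f p) + c * (2 * t * ⟪p - x, y - p⟫ + t ^ 2 * ‖y - p‖ ^ 2) := by
      nlinarith [hf1, hf2]
    have h3 : 0 ≤ t * (f y - f p + 2 * c * ⟪p - x, y - p⟫ + c * t * ‖y - p‖ ^ 2) := by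
      nlinarith [h0]
    nlinarith [h3, ht0]
  have hlim : Tendsto (fun t : ℝ => f y - f p + 2 * c * ⟪p - x, y - p⟫ + c * t * ‖y - p‖ ^ 2)
      (𝓝[>] (0:ℝ)) (𝓝 (f y - f p + 2 * c * ⟪p - x, y - p⟫)) := by
    have hcont : Continuous fun t : ℝ =>
        f y - f p + 2 * c * ⟪p - x, y - p⟫ + c * t * ‖y - p‖ ^ 2 := by continuity
    have h0 : Tendsto (fun t : ℝ => f y - f p + 2 * c * ⟪p - x, y - p⟫ + c * t * ‖y - p‖ ^ 2)
        (𝓝[>] (0:ℝ))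
        (𝓝 (f y - f p + 2 * c * ⟪p - x, y - p⟫ + c * 0 * ‖y - p‖ ^ 2)) :=
      (hcont.tendsto 0).mono_left nhdsWithin_le_nhds
    simpa using h0
  have hge : 0 ≤ f y - f p + 2 * c * ⟪p - x, y - p⟫ := by
    apply ge_of_tendsto hlim
    filter_upwards [Ioc_mem_nhdsGT_of_mem (by norm_num : (0:ℝ) ∈ Set.Ico (0:ℝ) 1)] with t ht
    exact key t ht
  have hinner : ⟪p - x, y - p⟫ = -⟪x - p, y - p⟫ := by
    rw [← inner_neg_left]; congr 1; abel
  rw [hinner] at hge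
  have h8 : 2 * c * ⟪x - p, y - p⟫ ≤ f y - f p := by linarith
  have h9 := mul_le_mul_of_nonneg_left h8 (le_of_lt hγ)
  have h10 : γ * (2 * c * ⟪x - p, y - p⟫) = ⟪x - p, y - p⟫ := by
    rw [hc]; field_simp
  linarith [h9, h10]

/-- Firm nonexpansiveness of prox. -/
lemma fdrs_prox_firm (f : H → ℝ) (hfconv : ConvexOn ℝ Set.univ f) {γ : ℝ} (hγ : 0 < γ)
    (proxf : H → H)
    (hprox : ∀ x, IsMinOn (fun y => f y + (1 / (2 * γ)) * ‖y - x‖ ^ 2) Set.univ (proxf x))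
    (a b : H) : ‖proxf a - proxf b‖ ^ 2 ≤ ⟪proxf a - proxf b, a - b⟫ := by
  have h1 := fdrs_prox_var_ineq f hfconv hγ (hprox a) (proxf b)
  have h2 := fdrs_prox_var_ineq f hfconv hγ (hprox b) (proxf a)
  set p := proxf a
  set q := proxf b
  have hsum : ⟪a - p, q - p⟫ + ⟪b - q, p - q⟫ ≤ 0 := by linarith
  have expand : ⟪a - p, q - p⟫ + ⟪b - q, p - q⟫ = ⟪p - q, p - q⟫ - ⟪p - q, a - b⟫ := by
    simp only [inner_sub_left, inner_sub_right]
    linear_combination real_inner_comm a p - real_inner_comm a q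
      + real_inner_comm b q - real_inner_comm b p
  have hself : ⟪p - q, p - q⟫ = ‖p - q‖ ^ 2 := real_inner_self_eq_norm_sq _
  linarith [hsum, expand, hself]

/-- Firm nonexpansiveness of the averaged operator N = ½ I + ½ refl_f ∘ refl_V. -/
lemma fdrs_N_firm (PV proxf : H → H)
    (hfirm : ∀ a b, ‖proxf a - proxf b‖ ^ 2 ≤ ⟪proxf a - proxf b, a - b⟫)
    (hrefl : ∀ a b : H, ‖((2:ℝ) • PV a - a) - ((2:ℝ) • PV b - b)‖ = ‖a - b‖)
    (a b : H) :
    ‖((1/2:ℝ) • a + (1/2:ℝ) • ((2:ℝ) • proxf ((2:ℝ) • PV a - a) - ((2:ℝ) • PV a - a)))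
      - ((1/2:ℝ) • b + (1/2:ℝ) • ((2:ℝ) • proxf ((2:ℝ) • PV b - b) - ((2:ℝ) • PV b - b)))‖ ^ 2
    + ‖(a - ((1/2:ℝ) • a + (1/2:ℝ) • ((2:ℝ) • proxf ((2:ℝ) • PV a - a) - ((2:ℝ) • PV a - a))))
      - (b - ((1/2:ℝ) • b + (1/2:ℝ) • ((2:ℝ) • proxf ((2:ℝ) • PV b - b) - ((2:ℝ) • PV b - b))))‖ ^ 2
    ≤ ‖a - b‖ ^ 2 := by
  set Sa := (2:ℝ) • PV a - a with hSa
  set Sb := (2:ℝ) • PV b - b with hSb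
  set Ra := (2:ℝ) • proxf Sa - Sa with hRa
  set Rb := (2:ℝ) • proxf Sb - Sb with hRb
  set w := a - b with hw
  set r := Ra - Rb with hr
  have hS : ‖Sa - Sb‖ = ‖w‖ := hrefl a b
  have hRnon : ‖r‖ ^ 2 ≤ ‖w‖ ^ 2 := by
    have hfb := hfirm Sa Sb
    have hexp : r = (2:ℝ) • (proxf Sa - proxf Sb) - (Sa - Sb) := by
      rw [hr, hRa, hRb]; module
    have hnorm : ‖r‖ ^ 2 = 4 * ‖proxf Sa - proxf Sb‖ ^ 2
        - 4 * ⟪proxf Sa - proxf Sb, Sa - Sb⟫ + ‖Sa - Sb‖ ^ 2 := by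
      rw [hexp, norm_sub_sq_real, norm_smul, real_inner_smul_left]
      simp [Real.norm_eq_abs]
      ring
    rw [← hS]
    nlinarith [hfb, hnorm]
  have hNd : ((1/2:ℝ) • a + (1/2:ℝ) • Ra) - ((1/2:ℝ) • b + (1/2:ℝ) • Rb)
      = (1/2:ℝ) • (w + r) := by rw [hw, hr]; module
  have hId : (a - ((1/2:ℝ) • a + (1/2:ℝ) • Ra)) - (b - ((1/2:ℝ) • b + (1/2:ℝ) • Rb))
      = (1/2:ℝ) • (w - r) := by rw [hw, hr]; module
  rw [hNd, hId, norm_smul, norm_smul]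
  have hpar := parallelogram_law_with_norm ℝ w r
  simp only [Real.norm_eq_abs]
  rw [mul_pow, mul_pow]
  have h1 : |(1/2:ℝ)| ^ 2 = 1/4 := by norm_num
  rw [h1]
  nlinarith [hpar, sq_nonneg ‖w + r‖, sq_nonneg ‖w - r‖, hRnon]

end AuxFDRS

set_option maxHeartbeats 800000

/-- scalar lemma: relaxation bound consequences -/
lemma fdrs_scalar1 {bV g e l cc : ℝ} (hbV : 0 < bV) (hg0 : 0 < g) (hg2 : g < 2 * bV)
    (he0 : 0 < e) (he1 : e < 1)
    (hcc : cc = g * (2 * bV - g) / (1 + e))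
    (hl0 : 0 < l)
    (hl2 : l * (2 * bV) < (1 - e) * ((4 * bV - g) + e * (2 * bV))) :
    0 < 2 - l ∧ (l - 1) * g ^ 2 ≤ (2 - l) * cc := by
  constructor
  · nlinarith [hl2, mul_pos he0 hbV, mul_pos (mul_pos he0 he0) hbV, mul_pos he0 hg0]
  · have hcert1 : 0 ≤ e * (1 - e) * (2 * bV - g) ^ 2 :=
      mul_nonneg (mul_nonneg he0.le (by linarith)) (sq_nonneg _)
    have hcert2 : 0 ≤ e ^ 2 * bV * (4 * bV - (1 - e) * g) := by
      apply mul_nonneg (mul_nonneg (sq_nonneg _) hbV.le)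
      nlinarith
    have hpoly : (1 - e) * ((4 * bV - g) + e * (2 * bV)) * (e * g + 2 * bV)
        ≤ 2 * bV * (g * (1 + e) + 2 * (2 * bV - g)) := by
      nlinarith [hcert1, hcert2]
    have heg : 0 < e * g + 2 * bV := by positivity
    have hchain := mul_lt_mul_of_pos_right hl2 heg
    have hP2' : l * (e * g + 2 * bV) ≤ g * (1 + e) + 2 * (2 * bV - g) := by
      nlinarith [hchain, hpoly, hbV]
    have hrw : (2 - l) * cc = ((2 - l) * (g * (2 * bV - g))) / (1 + e) := by
      rw [hcc]; ring
    rw [hrw, le_div_iff₀ (by linarith : (0:ℝ) < 1 + e)]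
    nlinarith [mul_le_mul_of_nonneg_left hP2' hg0.le]

/-- scalar lemma: the per-step combination -/
lemma fdrs_scalar2 {g bV l cc D W Vv U Iwv Ivu Iuw nv nu : ℝ}
    (hg0 : 0 < g) (hl0 : 0 < l) (hP1 : 0 < 2 - l) (hP2 : (l - 1) * g ^ 2 ≤ (2 - l) * cc)
    (hkey : (W - 2 * Iwv + Vv) + (Vv - 2 * g * Ivu + g ^ 2 * U) ≤ W - 2 * g * Iuw + g ^ 2 * U)
    (hIvu : Ivu ≤ nv * nu) (hnv : Vv = nv ^ 2) (hnu : U = nu ^ 2)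
    (hnv0 : 0 ≤ nv) (hnu0 : 0 ≤ nu)
    (hcoco : bV * U ≤ Iuw)
    (hDc : g * (2 * bV - g) - cc = D) :
    W - 2 * l * Iwv + l ^ 2 * Vv ≤ W - D * (l * U) := by
  have hquad : 0 ≤ (2 - l) * Vv - 2 * g * (nv * nu) + (g ^ 2 + cc) * U := by
    rw [hnv, hnu]
    nlinarith [sq_nonneg ((2 - l) * nv - g * nu), hP2, hP1, sq_nonneg nu, sq_nonneg nv,
      mul_nonneg hnv0 hnu0]
  have hfin := mul_nonneg hl0.le hquad
  have hk2 := mul_le_mul_of_nonneg_left hkey hl0.le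
  have t1 : 0 ≤ l * g * (nv * nu - Ivu) :=
    mul_nonneg (mul_nonneg hl0.le hg0.le) (by linarith)
  have t2 : 0 ≤ l * g * (Iuw - bV * U) :=
    mul_nonneg (mul_nonneg hl0.le hg0.le) (by linarith)
  have hDlin : D * (l * U) = (g * (2 * bV - g) - cc) * (l * U) := by rw [hDc]
  nlinarith [hk2, hfin, t1, t2, hDlin]


/-- gradient summability for the FDRS iteration. -/
theorem fdrs_gradient_summability
    {H : Type*} [NormedAddCommGroup H] [InnerProductSpace ℝ H] [CompleteSpace H]
    (V : Submodule ℝ H) [CompleteSpace V]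
    (PV : H → H) (hPV : ∀ x, PV x = (Submodule.orthogonalProjection V x : H))
    (f g : H → ℝ) (gradg gradh proxf : H → H)
    (β βV γ α : ℝ) (hβ : 0 < β) (hβV : 0 < βV)
    (hγ : γ ∈ Set.Ioo (0 : ℝ) (2 * βV))
    (hα : α = 2 * βV / (4 * βV - γ))
    (hfconv : ConvexOn ℝ Set.univ f) (hfcont : Continuous f)
    (hgconv : ConvexOn ℝ Set.univ g)
    (hgdiff : ∀ x, HasGradientAt g (gradg x) x)
    (hglip : LipschitzWith (1 / β).toNNReal gradg)
    (hgradh : ∀ x, gradh x = PV (gradg (PV x)))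
    (hgradhlip : LipschitzWith (1 / βV).toNNReal gradh)
    (hprox : ∀ x, IsMinOn (fun y => f y + (1 / (2 * γ)) * ‖y - x‖ ^ 2) Set.univ (proxf x))
    (T : H → H)
    (hT : ∀ z, T z = (1 / 2 : ℝ) • (z - γ • gradh z)
        + (1 / 2 : ℝ) • ((2 : ℝ) • proxf ((2 : ℝ) • PV (z - γ • gradh z) - (z - γ • gradh z))
            - ((2 : ℝ) • PV (z - γ • gradh z) - (z - γ • gradh z))))
    -- relaxation parameters and iterates
    (ε : ℝ) (hε : ε ∈ Set.Ioo (0 : ℝ) 1)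
    (lam : ℕ → ℝ)
    (hlam : ∀ k, lam k ∈ Set.Ioo (0 : ℝ) ((1 - ε) * (1 + ε * α) / α))
    (z : ℕ → H)
    (hz : ∀ k, z (k + 1) = (1 - lam k) • z k + lam k • T (z k))
    (zs : H) (hzs : T zs = zs) :
    ∀ n : ℕ, ∑ i ∈ Finset.range n, lam i * ‖gradh (z i) - gradh zs‖ ^ 2
      ≤ (1 + ε) * ‖z 0 - zs‖ ^ 2 / (γ * ε * (2 * βV - γ)) := by
  obtain ⟨hγ0, hγ2⟩ := hγ
  obtain ⟨hε0, hε1⟩ := hε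
  -- projection properties
  have hPVadd : ∀ a b : H, PV (a + b) = PV a + PV b := by
    intro a b; simp [hPV]
  have hPVsmul : ∀ (r : ℝ) (a : H), PV (r • a) = r • PV a := by
    intro r a; simp [hPV]
  have hPVsa : ∀ u v : H, ⟪PV u, v⟫ = ⟪u, PV v⟫ := by
    intro u v; rw [hPV, hPV]; exact Submodule.inner_starProjection_left_eq_right V u v
  have hPVidem : ∀ x, PV (PV x) = PV x := by
    intro x; simp [hPV, Submodule.orthogonalProjection_mem_subspace_eq_self]
    exact congrFun (congrArg DFunLike.coe V.isIdempotentElem_starProjection) x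
  have hPVself : ∀ w : H, ⟪PV w, w⟫ = ‖PV w‖ ^ 2 := by
    intro w
    have h1 : ⟪PV w, w⟫ = ⟪PV (PV w), w⟫ := by rw [hPVidem]
    rw [h1, hPVsa, real_inner_self_eq_norm_sq]
  have hrefl : ∀ a b : H, ‖((2:ℝ) • PV a - a) - ((2:ℝ) • PV b - b)‖ = ‖a - b‖ := by
    intro a b
    have hsub : PV (a - b) = PV a - PV b := by
      have hneg : PV (-b) = -PV b := by
        have := hPVsmul (-1) b; simpa using this
      rw [sub_eq_add_neg, hPVadd, hneg, sub_eq_add_neg]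
    have hlin : ((2:ℝ) • PV a - a) - ((2:ℝ) • PV b - b) = (2:ℝ) • PV (a - b) - (a - b) := by
      rw [hsub]; module
    rw [hlin]
    have hsq : ‖(2:ℝ) • PV (a - b) - (a - b)‖ ^ 2 = ‖a - b‖ ^ 2 := by
      rw [norm_sub_sq_real, norm_smul, real_inner_smul_left]
      simp only [Real.norm_eq_abs]
      have h2 : |(2:ℝ)| = 2 := by norm_num
      rw [h2, mul_pow]
      have := hPVself (a - b)
      nlinarith [this]
    have h := congrArg Real.sqrt hsq
    rwa [Real.sqrt_sq (norm_nonneg _), Real.sqrt_sq (norm_nonneg _)] at h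
  -- convexity and differentiability of h = g ∘ PV
  have hconvh : ConvexOn ℝ Set.univ (fun w => g (PV w)) := by
    refine ⟨convex_univ, ?_⟩
    intro x _ y _ s t hs ht hst
    have hcomb : PV (s • x + t • y) = s • PV x + t • PV y := by
      rw [hPVadd, hPVsmul, hPVsmul]
    simp only [hcomb]
    exact hgconv.2 (Set.mem_univ _) (Set.mem_univ _) hs ht hst
  have hgradh_diff : ∀ x, HasGradientAt (fun w => g (PV w)) (gradh x) x := by
    intro x
    set Pc : H →L[ℝ] H := V.subtypeL.comp (Submodule.orthogonalProjection V) with hPcdef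
    have hPce : ∀ w, Pc w = PV w := by
      intro w; simp [hPcdef, hPV]
    have hfun : (fun w => g (PV w)) = fun w => g (Pc w) := by
      funext w; rw [hPce]
    rw [hasGradientAt_iff_hasFDerivAt, hfun]
    have hg := (hgdiff (PV x)).hasFDerivAt
    have hPcd : HasFDerivAt Pc Pc x := Pc.hasFDerivAt
    have hgx : HasFDerivAt g ((InnerProductSpace.toDual ℝ H) (gradg (PV x)) : H →L[ℝ] ℝ)
        (Pc x) := by
      rw [hPce]; exact hg
    have hcomp := hgx.comp x hPcd
    have heq : (((InnerProductSpace.toDual ℝ H) (gradg (PV x)) : H →L[ℝ] ℝ).comp Pc)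
        = ((InnerProductSpace.toDual ℝ H) (gradh x) : H →L[ℝ] ℝ) := by
      ext v
      simp only [ContinuousLinearMap.comp_apply, InnerProductSpace.toDual_apply_apply]
      rw [hPce, hgradh]
      exact (hPVsa (gradg (PV x)) v).symm
    rw [← heq]
    exact hcomp
  have hlip' : ∀ a b : H, ‖gradh a - gradh b‖ ≤ (1 / βV) * ‖a - b‖ := by
    intro a b
    have hd := hgradhlip.dist_le_mul a b
    rw [dist_eq_norm, dist_eq_norm] at hd
    rwa [Real.coe_toNNReal _ (by positivity)] at hd
  have coco : ∀ a b : H, βV * ‖gradh a - gradh b‖ ^ 2 ≤ ⟪gradh a - gradh b, a - b⟫ :=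
    fun a b => fdrs_baillon_haddad _ hconvh gradh hgradh_diff hβV hlip' a b
  have firm := fdrs_prox_firm f hfconv hγ0 proxf hprox
  -- scalar setup
  have h4γ : 0 < 4 * βV - γ := by linarith
  have hα0 : 0 < α := by rw [hα]; positivity
  have hαval : α * (4 * βV - γ) = 2 * βV := by rw [hα]; field_simp; exact div_self (by linarith)
  set c : ℝ := γ * (2 * βV - γ) / (1 + ε) with hcdef
  have hbγ : 0 < 2 * βV - γ := by linarith
  have hc0 : 0 < c := by
    apply div_pos (by positivity) (by linarith)
  set D : ℝ := ε * γ * (2 * βV - γ) / (1 + ε) with hDdef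
  have hD0 : 0 < D := by
    apply div_pos (by positivity) (by linarith)
  have hDc : γ * (2 * βV - γ) - c = D := by
    rw [hcdef, hDdef]; field_simp; ring
  have hscal : ∀ k, 0 < 2 - lam k ∧ (lam k - 1) * γ ^ 2 ≤ (2 - lam k) * c := by
    intro k
    obtain ⟨hl0, hl1⟩ := hlam k
    have hla : lam k * α < (1 - ε) * (1 + ε * α) := (lt_div_iff₀ hα0).mp hl1
    have hmul := mul_lt_mul_of_pos_right hla h4γ
    have h1 : lam k * (2 * βV) = lam k * α * (4 * βV - γ) := by rw [mul_assoc, hαval]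
    have h2 : ε * (2 * βV) = ε * (α * (4 * βV - γ)) := by rw [hαval]
    have hl2 : lam k * (2 * βV) < (1 - ε) * ((4 * βV - γ) + ε * (2 * βV)) := by
      nlinarith [hmul, h1, h2]
    exact fdrs_scalar1 hβV hγ0 hγ2 hε0 hε1 hcdef hl0 hl2
  -- per-step decrease
  have step : ∀ k, ‖z (k + 1) - zs‖ ^ 2
      ≤ ‖z k - zs‖ ^ 2 - D * (lam k * ‖gradh (z k) - gradh zs‖ ^ 2) := by
    intro k
    obtain ⟨hl0, hl1⟩ := hlam k
    obtain ⟨hP1, hP2⟩ := hscal k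
    set u := gradh (z k) - gradh zs with hu
    set v := z k - T (z k) with hv
    set w := z k - zs with hw
    set a := z k - γ • gradh (z k) with ha
    set b := zs - γ • gradh zs with hb
    have hTa := hT (z k)
    rw [← ha] at hTa
    have hTb := hT zs
    rw [← hb] at hTb
    rw [hzs] at hTb
    have hkey := fdrs_N_firm PV proxf firm hrefl a b
    rw [← hTa, ← hTb] at hkey
    have hab : a - b = w - γ • u := by rw [ha, hb, hw, hu]; module
    have havt : (a - T (z k)) - (b - zs) = v - γ • u := by rw [ha, hb, hv, hu]; module
    rw [hab, havt] at hkey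
    have ETz : T (z k) - zs = w - v := by rw [hw, hv]; module
    rw [ETz] at hkey
    have Ewu : ‖w - γ • u‖ ^ 2 = ‖w‖ ^ 2 - 2 * γ * ⟪w, u⟫ + γ ^ 2 * ‖u‖ ^ 2 := by
      rw [norm_sub_sq_real, real_inner_smul_right, norm_smul, Real.norm_eq_abs,
        abs_of_pos hγ0, mul_pow]
      ring
    have Evu : ‖v - γ • u‖ ^ 2 = ‖v‖ ^ 2 - 2 * γ * ⟪v, u⟫ + γ ^ 2 * ‖u‖ ^ 2 := by
      rw [norm_sub_sq_real, real_inner_smul_right, norm_smul, Real.norm_eq_abs,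
        abs_of_pos hγ0, mul_pow]
      ring
    have Ewv : ‖w - v‖ ^ 2 = ‖w‖ ^ 2 - 2 * ⟪w, v⟫ + ‖v‖ ^ 2 := by
      rw [norm_sub_sq_real]
    rw [Ewu, Evu, Ewv] at hkey
    have Ecoco := coco (z k) zs
    rw [← hu, ← hw] at Ecoco
    have Ecomm : ⟪w, u⟫ = ⟪u, w⟫ := real_inner_comm _ _
    have hz1 : z (k + 1) - zs = w - lam k • v := by
      rw [hz k, hw, hv]; module
    rw [hz1]
    have Ez : ‖w - lam k • v‖ ^ 2 = ‖w‖ ^ 2 - 2 * lam k * ⟪w, v⟫ + lam k ^ 2 * ‖v‖ ^ 2 := by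
      rw [norm_sub_sq_real, real_inner_smul_right, norm_smul, Real.norm_eq_abs, mul_pow, sq_abs]
      ring
    rw [Ez]
    have hIvu : ⟪v, u⟫ ≤ ‖v‖ * ‖u‖ := real_inner_le_norm v u
    rw [Ecomm] at hkey
    exact fdrs_scalar2 hγ0 hl0 hP1 hP2 hkey hIvu rfl rfl (norm_nonneg v) (norm_nonneg u)
      Ecoco hDc
  -- telescoping
  have mono : ∀ n : ℕ, D * (∑ i ∈ Finset.range n, lam i * ‖gradh (z i) - gradh zs‖ ^ 2)
      ≤ ‖z 0 - zs‖ ^ 2 - ‖z n - zs‖ ^ 2 := by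
    intro n
    induction n with
    | zero => simp
    | succ n ih =>
      rw [Finset.sum_range_succ, mul_add]
      have hs := step n
      linarith [hs, ih]
  intro n
  have h1 := mono n
  have h2 : (0:ℝ) ≤ ‖z n - zs‖ ^ 2 := sq_nonneg _
  have h3 : D * (∑ i ∈ Finset.range n, lam i * ‖gradh (z i) - gradh zs‖ ^ 2)
      ≤ ‖z 0 - zs‖ ^ 2 := by linarith
  have h4 : (∑ i ∈ Finset.range n, lam i * ‖gradh (z i) - gradh zs‖ ^ 2)
      ≤ ‖z 0 - zs‖ ^ 2 / D := (le_div_iff₀' hD0).mpr h3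
  have h5 : ‖z 0 - zs‖ ^ 2 / D = (1 + ε) * ‖z 0 - zs‖ ^ 2 / (γ * ε * (2 * βV - γ)) := by
    rw [hDdef]
    rw [div_div_eq_mul_div, div_eq_div_iff (by positivity) (by positivity)]
    ring
  linarith [h4, h5.symm.le, h5.le]
end
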